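/- Let Δ⁺ be the positive roots of a semisimple Lie algebra and β_π its Kostant cascade (the maximal set of strongly orthogonal positive roots obtained by iteratively taking highest roots of orthogonal complements). For each β in β_π let H_β = {α ∈ Δ_K : (α, β) > 0} where Δ_K is the irreducible subsystem with highest root β. Then Δ⁺ is the disjoint union of the sets H_β over β ∈ β_π. -/

import Mathlib

/- Kostant cascade machinery for a root system in a real inner product space. -/

open scoped RealInnerProductSpace

variable {V : Type*} [NormedAddCommGroup V] [InnerProductSpace ℝ V]

/-- Two roots of `Rs` are linked if they are not orthogonal. -/
def Linked (Rs : Set V) (a b : V) : Prop := a ∈ Rs ∧ b ∈ Rs ∧ ⟪a, b⟫ ≠ 0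

/-- `C` is an irreducible component of the root subsystem `Rs` :
it is a connectedness class of the non-orthogonality relation. -/
def IsComponent (Rs : Set V) (C : Set V) : Prop :=
  ∃ a ∈ Rs, C = {b | Relation.ReflTransGen (Linked Rs) a b}

/-- `β` is the highest root of the (irreducible) subsystem `C` of `Rs`
with respect to the positive system `pos`. -/
def IsHighestRoot (Rs pos C : Set V) (β : V) : Prop :=
  β ∈ C ∧ β ∈ pos ∧ ∀ α ∈ C, α ∈ pos → β + α ∉ Rs

/-- The subsystems occurring in the recursive construction of the Kostant cascade:
irreducible components of `Rs`, and recursively irreducible components of the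
orthogonal complement of the highest root of a cascade subsystem. -/
inductive CascadeSub (Rs pos : Set V) : Set V → Prop
  | base (C : Set V) : IsComponent Rs C → CascadeSub Rs pos C
  | step (K C : Set V) (β : V) : CascadeSub Rs pos K → IsHighestRoot Rs pos K β →
      IsComponent {α ∈ K | ⟪α, β⟫ = 0} C → CascadeSub Rs pos C

/-- The Kostant cascade `β_π` : the highest roots of the cascade subsystems. -/
def cascadeSet (Rs pos : Set V) : Set V :=
  {β | ∃ K, CascadeSub Rs pos K ∧ IsHighestRoot Rs pos K β}

/-- `H_β = {α ∈ Δ_K : (α, β) > 0}` where `Δ_K` is the cascade subsystem with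
highest root `β`. -/
def cascadeH (Rs pos : Set V) (β : V) : Set V :=
  {α | ∃ K, CascadeSub Rs pos K ∧ IsHighestRoot Rs pos K β ∧ α ∈ K ∧ 0 < ⟪α, β⟫}

/-- `Rs` is a (reduced, crystallographic) root system, as the set of roots of a
semisimple Lie algebra. -/
structure IsRootSystem (Rs : Set V) : Prop where
  finite : Rs.Finite
  ne_zero : (0 : V) ∉ Rs
  neg_mem : ∀ α ∈ Rs, -α ∈ Rs
  reduced : ∀ α ∈ Rs, ∀ t : ℝ, t • α ∈ Rs → t = 1 ∨ t = -1
  crystallographic : ∀ α ∈ Rs, ∀ β ∈ Rs, ∃ z : ℤ, 2 * ⟪β, α⟫ / ⟪α, α⟫ = (z : ℝ)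
  reflect_mem : ∀ α ∈ Rs, ∀ β ∈ Rs, β - (2 * ⟪β, α⟫ / ⟪α, α⟫) • α ∈ Rs

/-- `pos` is a system of positive roots for `Rs`. -/
structure IsPositiveSystem (Rs pos : Set V) : Prop where
  subset : pos ⊆ Rs
  pos_iff : ∀ α ∈ Rs, (α ∈ pos ↔ -α ∉ pos)
  add_mem : ∀ α ∈ pos, ∀ β ∈ pos, α + β ∈ Rs → α + β ∈ pos

/-! ### Auxiliary machinery -/

section Aux

variable {Rs pos : Set V}

lemma kc_inner_self_pos (hRS : IsRootSystem Rs) {a : V} (ha : a ∈ Rs) : (0:ℝ) < ⟪a, a⟫ := by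
  have h0 : a ≠ 0 := fun h => hRS.ne_zero (h ▸ ha)
  exact lt_of_le_of_ne real_inner_self_nonneg (fun h => h0 (inner_self_eq_zero.mp h.symm))

/-- If two non-opposite roots have negative inner product, their sum is a root. -/
lemma kc_add_mem (hRS : IsRootSystem Rs) {a b : V} (ha : a ∈ Rs) (hb : b ∈ Rs)
    (hneg : ⟪a, b⟫ < 0) (hne : a ≠ -b) : a + b ∈ Rs := by
  obtain ⟨n, hn⟩ := hRS.crystallographic a ha b hb
  obtain ⟨m, hm⟩ := hRS.crystallographic b hb a ha
  have hA := kc_inner_self_pos hRS ha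
  have hB := kc_inner_self_pos hRS hb
  have hba : ⟪b, a⟫ < 0 := by rwa [real_inner_comm]
  have hnneg : (n:ℝ) < 0 := by
    rw [← hn]; exact div_neg_of_neg_of_pos (by linarith) hA
  have hmneg : (m:ℝ) < 0 := by
    rw [← hm]; exact div_neg_of_neg_of_pos (by linarith) hB
  have hnZ : n < 0 := by exact_mod_cast hnneg
  have hmZ : m < 0 := by exact_mod_cast hmneg
  have hCS := real_inner_mul_inner_self_le a b
  have hprodR : (n:ℝ) * (m:ℝ) ≤ 4 := by
    rw [← hn, ← hm, div_mul_div_comm, div_le_iff₀ (by positivity)]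
    nlinarith [hCS, real_inner_comm a b]
  have hprod : n * m ≤ 4 := by exact_mod_cast hprodR
  by_cases hn1 : n = -1
  · have hr := hRS.reflect_mem a ha b hb
    rw [hn, hn1] at hr
    have : b - ((-1:ℤ):ℝ) • a = a + b := by push_cast; rw [neg_smul, one_smul, sub_neg_eq_add, add_comm]
    rwa [this] at hr
  · by_cases hm1 : m = -1
    · have hr := hRS.reflect_mem b hb a ha
      rw [hm, hm1] at hr
      have : a - ((-1:ℤ):ℝ) • b = a + b := by push_cast; rw [neg_smul, one_smul, sub_neg_eq_add]
      rwa [this] at hr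
    · exfalso
      have hn2 : n ≤ -2 := by omega
      have hm2 : m ≤ -2 := by omega
      have hkey : 0 ≤ n * m + 2 * n + 2 * m + 4 := by nlinarith
      have hnm : n = -2 ∧ m = -2 := by constructor <;> omega
      have hba2 : ⟪b, a⟫ = -⟪a, a⟫ := by
        rw [hnm.1] at hn; push_cast at hn
        field_simp at hn; linarith
      have hab2 : ⟪a, b⟫ = -⟪b, b⟫ := by
        rw [hnm.2] at hm; push_cast at hm
        field_simp at hm; linarith
      have hz : ⟪a + b, a + b⟫ = 0 := by
        rw [real_inner_add_add_self]
        have := real_inner_comm a b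
        nlinarith
      have : a + b = 0 := inner_self_eq_zero.mp hz
      exact hne (eq_neg_of_add_eq_zero_left this)

/-- If two distinct roots have positive inner product, their difference is a root. -/
lemma kc_sub_mem (hRS : IsRootSystem Rs) {a b : V} (ha : a ∈ Rs) (hb : b ∈ Rs)
    (hposin : 0 < ⟪a, b⟫) (hne : a ≠ b) : a - b ∈ Rs := by
  have h1 : ⟪a, -b⟫ < 0 := by rw [inner_neg_right]; linarith
  have h2 : a ≠ -(-b) := by rwa [neg_neg]
  have := kc_add_mem hRS ha (hRS.neg_mem b hb) h1 h2
  rwa [← sub_eq_add_neg] at this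

/-- The connectedness class of `a` in `S`. -/
def KCcl (S : Set V) (a : V) : Set V := {b | Relation.ReflTransGen (Linked S) a b}

lemma KCcl_self {S : Set V} {a : V} : a ∈ KCcl S a := Relation.ReflTransGen.refl

lemma kc_linked_symm {S : Set V} : Symmetric (Linked S) := by
  rintro u v ⟨h1, h2, h3⟩
  exact ⟨h2, h1, fun h => h3 (by rwa [real_inner_comm])⟩

lemma KCcl_subset {S : Set V} {a : V} (ha : a ∈ S) : KCcl S a ⊆ S := by
  intro b hb
  have hb' : Relation.ReflTransGen (Linked S) a b := hb
  induction hb' with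
  | refl => exact ha
  | tail h h' ih => exact h'.2.1

lemma KCcl_eq {S : Set V} {a x : V} (hx : x ∈ KCcl S a) : KCcl S x = KCcl S a := by
  have hx' : Relation.ReflTransGen (Linked S) a x := hx
  ext z
  constructor
  · intro hz; exact Relation.ReflTransGen.trans hx' hz
  · intro hz; exact Relation.ReflTransGen.trans
      (haveI : Std.Symm (Linked S) := ⟨fun _ _ h => kc_linked_symm h⟩;
        Relation.ReflTransGen.stdSymm.symm _ _ hx') hz

lemma KCcomp_subset {S C : Set V} (hC : IsComponent S C) : C ⊆ S := by
  obtain ⟨a, ha, rfl⟩ := hC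
  exact KCcl_subset ha

lemma KCcomp_eq_of_mem {S C : Set V} {x : V} (hC : IsComponent S C) (hx : x ∈ C) :
    C = KCcl S x := by
  obtain ⟨a, ha, rfl⟩ := hC
  exact (KCcl_eq hx).symm

lemma KCcomp_eq_of_mem₂ {S C C' : Set V} {x : V} (hC : IsComponent S C)
    (hC' : IsComponent S C') (hx : x ∈ C) (hx' : x ∈ C') : C = C' := by
  rw [KCcomp_eq_of_mem hC hx, KCcomp_eq_of_mem hC' hx']

lemma KCcl_chain {S : Set V} {a : V} (ha : a ∈ S) :
    ∀ b ∈ KCcl S a, Relation.ReflTransGen (Linked (KCcl S a)) a b := by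
  intro b hb
  have hb' : Relation.ReflTransGen (Linked S) a b := hb
  induction hb' with
  | refl => exact Relation.ReflTransGen.refl
  | tail h h' ih => exact (ih h).tail ⟨h, Relation.ReflTransGen.tail h h', h'.2.2⟩

lemma KCcl_conn {S : Set V} {a : V} (ha : a ∈ S) :
    ∀ x ∈ KCcl S a, ∀ y ∈ KCcl S a, Relation.ReflTransGen (Linked (KCcl S a)) x y := by
  intro x hx y hy
  haveI : Std.Symm (Linked (KCcl S a)) := ⟨fun _ _ h => kc_linked_symm h⟩
  exact (Relation.ReflTransGen.stdSymm.symm _ _ (KCcl_chain ha x hx)).trans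
    (KCcl_chain ha y hy)

/-- Invariants of the subsystems arising in the cascade construction. -/
structure KCSub (Rs K : Set V) : Prop where
  subset : K ⊆ Rs
  nonempty : K.Nonempty
  neg : ∀ x ∈ K, -x ∈ K
  closed : ∀ x ∈ K, ∀ y ∈ K, x + y ∈ Rs → x + y ∈ K
  conn : ∀ x ∈ K, ∀ y ∈ K, Relation.ReflTransGen (Linked K) x y

lemma KCSub_comp (hRS : IsRootSystem Rs) {S C : Set V} (hSsub : S ⊆ Rs)
    (hSneg : ∀ x ∈ S, -x ∈ S) (hSclosed : ∀ x ∈ S, ∀ y ∈ S, x + y ∈ Rs → x + y ∈ S)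
    (hC : IsComponent S C) : KCSub Rs C := by
  obtain ⟨a, ha, rfl⟩ := hC
  refine ⟨(KCcl_subset ha).trans hSsub, ⟨a, KCcl_self⟩, ?_, ?_, KCcl_conn ha⟩
  · intro x hx
    have hxS : x ∈ S := KCcl_subset ha hx
    have hx0 : x ≠ 0 := fun h => hRS.ne_zero (h ▸ hSsub hxS)
    have hlink : Linked S x (-x) := by
      refine ⟨hxS, hSneg x hxS, ?_⟩
      rw [inner_neg_right]
      exact neg_ne_zero.mpr (fun h => hx0 (inner_self_eq_zero.mp h))
    exact Relation.ReflTransGen.tail hx hlink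
  · intro x hx y hy hxy
    have hxS : x ∈ S := KCcl_subset ha hx
    have hyS : y ∈ S := KCcl_subset ha hy
    have hxyS : x + y ∈ S := hSclosed x hxS y hyS hxy
    have hxy0 : x + y ≠ 0 := fun h => hRS.ne_zero (h ▸ hxy)
    have : ⟪x + y, x⟫ ≠ 0 ∨ ⟪x + y, y⟫ ≠ 0 := by
      by_contra h
      push_neg at h
      have : ⟪x + y, x + y⟫ = 0 := by rw [inner_add_right, h.1, h.2, add_zero]
      exact hxy0 (inner_self_eq_zero.mp this)
    rcases this with h | h
    · exact Relation.ReflTransGen.tail hx ⟨hxS, hxyS, by rwa [real_inner_comm]⟩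
    · exact Relation.ReflTransGen.tail hy ⟨hyS, hxyS, by rwa [real_inner_comm]⟩

lemma KCSub_cascade (hRS : IsRootSystem Rs) {K : Set V} (h : CascadeSub Rs pos K) :
    KCSub Rs K := by
  induction h with
  | base C hC =>
      exact KCSub_comp hRS (fun x hx => hx) hRS.neg_mem (fun x _ y _ h => h) hC
  | step K C θ hK hmax hC ih =>
      refine KCSub_comp hRS (fun x hx => ih.subset hx.1) ?_ ?_ hC
      · intro x hx
        exact ⟨ih.neg x hx.1, by rw [inner_neg_left, hx.2, neg_zero]⟩
      · intro x hx y hy hxy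
        exact ⟨ih.closed x hx.1 y hy.1 hxy, by rw [inner_add_left, hx.2, hy.2, add_zero]⟩

lemma KC_sign (hpos : IsPositiveSystem Rs pos) {x : V} (hx : x ∈ Rs) :
    x ∈ pos ∨ -x ∈ pos := by
  by_cases h : x ∈ pos
  · exact Or.inl h
  · right
    by_contra hn
    exact h ((hpos.pos_iff x hx).mpr hn)

/-- Dominance: the inner product of a positive root of `K` with a highest root is nonneg. -/
lemma KC_dom (hRS : IsRootSystem Rs) (hpos : IsPositiveSystem Rs pos) {K : Set V} {θ : V}
    (hK : KCSub Rs K) (hθ : IsHighestRoot Rs pos K θ) {γ : V} (hγK : γ ∈ K) (hγp : γ ∈ pos) :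
    0 ≤ ⟪γ, θ⟫ := by
  by_contra h
  push_neg at h
  have hne : γ ≠ -θ := by
    intro heq
    exact (hpos.pos_iff θ (hK.subset hθ.1)).mp hθ.2.1 (heq ▸ hγp)
  have := kc_add_mem hRS (hK.subset hγK) (hK.subset hθ.1) h hne
  exact hθ.2.2 γ hγK hγp (by rwa [add_comm] at this)

lemma kc_sum_inner_nonneg (a : V) (m : Multiset V) (h : ∀ b ∈ m, 0 ≤ ⟪a, b⟫) :
    0 ≤ ⟪a, m.sum⟫ := by
  induction m using Multiset.induction with
  | empty => simp
  | cons x s ih =>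
      rw [Multiset.sum_cons, inner_add_right]
      have h1 := h x (Multiset.mem_cons_self x s)
      have h2 := ih (fun b hb => h b (Multiset.mem_cons_of_mem hb))
      linarith

/-- A nonempty multiset of positive roots has nonzero sum. -/
lemma kc_no_zero_sum (hRS : IsRootSystem Rs) (hpos : IsPositiveSystem Rs pos) :
    ∀ n (m : Multiset V), Multiset.card m = n → (∀ x ∈ m, x ∈ pos) → m ≠ 0 →
      m.sum ≠ 0 := by
  intro n
  induction n using Nat.strong_induction_on with
  | _ n ih =>
    intro m hcard hmem hne hsum0
    classical
    obtain ⟨a, ha⟩ := Multiset.exists_mem_of_ne_zero hne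
    have hapos : a ∈ pos := hmem a ha
    have haRs : a ∈ Rs := hpos.subset hapos
    have ha0 : a ≠ 0 := fun h => hRS.ne_zero (h ▸ haRs)
    set r := m.erase a with hrdef
    have hmr : a ::ₘ r = m := Multiset.cons_erase ha
    have hsum : a + r.sum = 0 := by rw [← Multiset.sum_cons, hmr]; exact hsum0
    have hrsum : r.sum = -a := eq_neg_of_add_eq_zero_right hsum
    by_cases hr0 : r = 0
    · rw [hr0] at hrsum
      simp at hrsum
      exact ha0 hrsum
    · have hbex : ∃ b ∈ r, ⟪a, b⟫ < 0 := by
        by_contra hcon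
        push_neg at hcon
        have h1 : 0 ≤ ⟪a, r.sum⟫ := kc_sum_inner_nonneg a r hcon
        rw [hrsum, inner_neg_right] at h1
        linarith [kc_inner_self_pos hRS haRs]
      obtain ⟨b, hbr, hab⟩ := hbex
      have hbpos : b ∈ pos := hmem b (Multiset.mem_of_mem_erase hbr)
      have hbRs : b ∈ Rs := hpos.subset hbpos
      have habne : a ≠ -b := by
        intro h
        have : -b ∈ pos := h ▸ hapos
        exact (hpos.pos_iff b hbRs).mp hbpos (by simpa using this)
      have habRs : a + b ∈ Rs := kc_add_mem hRS haRs hbRs hab habne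
      have habpos : a + b ∈ pos := hpos.add_mem a hapos b hbpos habRs
      set m' := (a + b) ::ₘ r.erase b with hm'def
      have hcr : 0 < Multiset.card r := Multiset.card_pos.mpr hr0
      have hc1 : Multiset.card r = n - 1 := by
        have h := Multiset.card_erase_of_mem ha
        rw [← hrdef, Nat.pred_eq_sub_one] at h
        omega
      have hc2 : Multiset.card (r.erase b) = Multiset.card r - 1 :=
        Multiset.card_erase_of_mem hbr
      have hcm' : Multiset.card m' = n - 1 := by
        rw [hm'def, Multiset.card_cons, hc2]
        omega
      have hlt : n - 1 < n := by omega
      have hmem' : ∀ x ∈ m', x ∈ pos := by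
        intro x hx
        rcases Multiset.mem_cons.mp hx with h | h
        · exact h ▸ habpos
        · exact hmem x (Multiset.mem_of_mem_erase (Multiset.mem_of_mem_erase h))
      have hb' : b + (r.erase b).sum = r.sum := by
        rw [← Multiset.sum_cons, Multiset.cons_erase hbr]
      have hsum' : m'.sum = 0 := by
        rw [hm'def, Multiset.sum_cons, add_assoc, hb', hsum]
      exact ih (n - 1) hlt m' hcm' hmem' (Multiset.cons_ne_zero) hsum'

/-- Existence of a highest root in a cascade-type subsystem. -/
lemma KC_max_exists (hRS : IsRootSystem Rs) (hpos : IsPositiveSystem Rs pos) {K : Set V}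
    (hK : KCSub Rs K) : ∃ θ, IsHighestRoot Rs pos K θ := by
  have hfin : (K ∩ pos).Finite := (hRS.finite.subset hK.subset).inter_of_left pos
  have hne : (K ∩ pos).Nonempty := by
    obtain ⟨x, hx⟩ := hK.nonempty
    rcases KC_sign hpos (hK.subset hx) with h | h
    · exact ⟨x, hx, h⟩
    · exact ⟨-x, hK.neg x hx, h⟩
  haveI := hfin.to_subtype
  let r : {x // x ∈ K ∩ pos} → {x // x ∈ K ∩ pos} → Prop :=
    fun x y => ∃ a ∈ pos, (x : V) = (y : V) + a
  have htg : ∀ {x y}, Relation.TransGen r x y →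
      ∃ m : Multiset V, m ≠ 0 ∧ (∀ b ∈ m, b ∈ pos) ∧ (x : V) = (y : V) + m.sum := by
    intro x y h
    induction h with
    | single h =>
        obtain ⟨a, hap, hxa⟩ := h
        exact ⟨{a}, by simp, by simpa using hap, by simpa using hxa⟩
    | tail h h' ih =>
        obtain ⟨m, hm0, hmp, hxm⟩ := ih
        obtain ⟨a, hap, hba⟩ := h'
        refine ⟨a ::ₘ m, Multiset.cons_ne_zero, ?_, ?_⟩
        · intro b hb
          rcases Multiset.mem_cons.mp hb with hb | hb
          · exact hb ▸ hap
          · exact hmp b hb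
        · rw [Multiset.sum_cons, hxm, hba]
          abel
  have hirr : ∀ x, ¬ Relation.TransGen r x x := by
    intro x hx
    obtain ⟨m, hm0, hmp, hxm⟩ := htg hx
    have : m.sum = 0 := by
      have := hxm
      nth_rewrite 1 [← add_zero (x : V)] at this
      exact (add_left_cancel this).symm
    exact kc_no_zero_sum hRS hpos (Multiset.card m) m rfl hmp hm0 this
  haveI : IsTrans _ (Relation.TransGen r) := ⟨fun _ _ _ => Relation.TransGen.trans⟩
  haveI : IsIrrefl _ (Relation.TransGen r) := ⟨hirr⟩
  have hwf := Finite.wellFounded_of_trans_of_irrefl (Relation.TransGen r)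
  obtain ⟨x0, hx0⟩ := hne
  obtain ⟨mx, -, hmin⟩ := hwf.has_min Set.univ ⟨⟨x0, hx0⟩, trivial⟩
  refine ⟨(mx : V), mx.2.1, mx.2.2, ?_⟩
  intro α hαK hαp hadd
  have hp : (mx : V) + α ∈ pos := hpos.add_mem _ mx.2.2 _ hαp hadd
  have hk : (mx : V) + α ∈ K := hK.closed _ mx.2.1 _ hαK hadd
  exact hmin ⟨(mx : V) + α, hk, hp⟩ trivial
    (Relation.TransGen.single ⟨α, hαp, rfl⟩)

/-- Uniqueness of the highest root of a connected cascade-type subsystem. -/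
lemma KC_max_unique (hRS : IsRootSystem Rs) (hpos : IsPositiveSystem Rs pos) {K : Set V}
    {θ₁ θ₂ : V} (hK : KCSub Rs K) (h1 : IsHighestRoot Rs pos K θ₁)
    (h2 : IsHighestRoot Rs pos K θ₂) : θ₁ = θ₂ := by
  by_contra hne
  have hθ₁Rs : θ₁ ∈ Rs := hK.subset h1.1
  have hθ₂Rs : θ₂ ∈ Rs := hK.subset h2.1
  -- orthogonality of the two highest roots
  have horth : ⟪θ₁, θ₂⟫ = 0 := by
    by_contra hno
    have hge : 0 ≤ ⟪θ₁, θ₂⟫ := KC_dom hRS hpos hK h2 h1.1 h1.2.1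
    have hgt : 0 < ⟪θ₁, θ₂⟫ := lt_of_le_of_ne hge (Ne.symm hno)
    have hdiff : θ₁ - θ₂ ∈ Rs := kc_sub_mem hRS hθ₁Rs hθ₂Rs hgt hne
    have hdiffK : θ₁ - θ₂ ∈ K := by
      have := hK.closed θ₁ h1.1 (-θ₂) (hK.neg θ₂ h2.1) (by rwa [← sub_eq_add_neg])
      rwa [← sub_eq_add_neg] at this
    rcases KC_sign hpos hdiff with h | h
    · have := h2.2.2 (θ₁ - θ₂) hdiffK h
      rw [add_sub_cancel] at this
      exact this hθ₁Rs
    · rw [neg_sub] at h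
      have hK' : θ₂ - θ₁ ∈ K := by rw [← neg_sub]; exact hK.neg _ hdiffK
      have := h1.2.2 (θ₂ - θ₁) hK' h
      rw [add_sub_cancel] at this
      exact this hθ₂Rs
  have hT12 : θ₁ + θ₂ ∉ Rs := h1.2.2 θ₂ h2.1 h2.2.1
  -- no root has positive inner product with both highest roots
  have hL7 : ∀ α ∈ K, 0 < ⟪α, θ₁⟫ → 0 < ⟪α, θ₂⟫ → False := by
    intro α hαK hp1 hp2
    have hαRs : α ∈ Rs := hK.subset hαK
    have hα1 : α ≠ θ₁ := by
      intro h; rw [h, horth] at hp2; exact lt_irrefl 0 hp2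
    have hε : α - θ₁ ∈ Rs := kc_sub_mem hRS hαRs hθ₁Rs hp1 hα1
    have hεK : α - θ₁ ∈ K := by
      have := hK.closed α hαK (-θ₁) (hK.neg θ₁ h1.1) (by rwa [← sub_eq_add_neg])
      rwa [← sub_eq_add_neg] at this
    rcases KC_sign hpos hε with h | h
    · have := h1.2.2 (α - θ₁) hεK h
      rw [add_sub_cancel] at this
      exact this hαRs
    · rw [neg_sub] at h
      have hεRs' : θ₁ - α ∈ Rs := by
        have := hRS.neg_mem _ hε
        rwa [neg_sub] at this
      have hne2 : θ₁ - α ≠ -θ₂ := by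
        intro heq
        have hα : α = θ₁ + θ₂ := by
          have h' : θ₁ = -θ₂ + α := sub_eq_iff_eq_add.mp heq
          rw [h']; abel
        exact hT12 (hα ▸ hαRs)
      have hin : ⟪θ₁ - α, θ₂⟫ < 0 := by
        rw [inner_sub_left, horth]; linarith
      have hsum : (θ₁ - α) + θ₂ ∈ Rs := kc_add_mem hRS hεRs' hθ₂Rs hin hne2
      have hK' : θ₁ - α ∈ K := by
        have := hK.neg _ hεK
        rwa [neg_sub] at this
      exact h2.2.2 (θ₁ - α) hK' h (by rwa [add_comm] at hsum)
  -- sign patterns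
  have hc1 : ∀ v ∈ K, ⟪v, θ₁⟫ ≠ 0 → ⟪v, θ₂⟫ = 0 := by
    have hc1p : ∀ v ∈ K, v ∈ pos → ⟪v, θ₁⟫ ≠ 0 → ⟪v, θ₂⟫ = 0 := by
      intro v hvK hvp hv1
      have g1 : 0 < ⟪v, θ₁⟫ := lt_of_le_of_ne (KC_dom hRS hpos hK h1 hvK hvp) (Ne.symm hv1)
      have g2 : 0 ≤ ⟪v, θ₂⟫ := KC_dom hRS hpos hK h2 hvK hvp
      rcases eq_or_lt_of_le g2 with h | h
      · exact h.symm
      · exact absurd (hL7 v hvK g1 h) not_false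
    intro v hvK hv1
    rcases KC_sign hpos (hK.subset hvK) with h | h
    · exact hc1p v hvK h hv1
    · have := hc1p (-v) (hK.neg v hvK) h
        (by rw [inner_neg_left]; exact neg_ne_zero.mpr hv1)
      rwa [inner_neg_left, neg_eq_zero] at this
  have hc2 : ∀ v ∈ K, ⟪v, θ₂⟫ ≠ 0 → ⟪v, θ₁⟫ = 0 := by
    have hc2p : ∀ v ∈ K, v ∈ pos → ⟪v, θ₂⟫ ≠ 0 → ⟪v, θ₁⟫ = 0 := by
      intro v hvK hvp hv2
      have g2 : 0 < ⟪v, θ₂⟫ := lt_of_le_of_ne (KC_dom hRS hpos hK h2 hvK hvp) (Ne.symm hv2)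
      have g1 : 0 ≤ ⟪v, θ₁⟫ := KC_dom hRS hpos hK h1 hvK hvp
      rcases eq_or_lt_of_le g1 with h | h
      · exact h.symm
      · exact absurd (hL7 v hvK h g2) not_false
    intro v hvK hv2
    rcases KC_sign hpos (hK.subset hvK) with h | h
    · exact hc2p v hvK h hv2
    · have := hc2p (-v) (hK.neg v hvK) h
        (by rw [inner_neg_left]; exact neg_ne_zero.mpr hv2)
      rwa [inner_neg_left, neg_eq_zero] at this
  -- normalization
  have hnorm1 : ∀ v ∈ K, ⟪v, θ₁⟫ ≠ 0 →
      ∃ v', v' ∈ K ∧ v' ∈ pos ∧ 0 < ⟪v', θ₁⟫ ∧ ⟪v', θ₂⟫ = 0 ∧ (v' = v ∨ v' = -v) := by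
    intro v hvK hv1
    rcases KC_sign hpos (hK.subset hvK) with h | h
    · exact ⟨v, hvK, h, lt_of_le_of_ne (KC_dom hRS hpos hK h1 hvK h) (Ne.symm hv1),
        hc1 v hvK hv1, Or.inl rfl⟩
    · have hnK := hK.neg v hvK
      have hn1 : ⟪-v, θ₁⟫ ≠ 0 := by rw [inner_neg_left]; exact neg_ne_zero.mpr hv1
      exact ⟨-v, hnK, h, lt_of_le_of_ne (KC_dom hRS hpos hK h1 hnK h) (Ne.symm hn1),
        hc1 (-v) hnK hn1, Or.inr rfl⟩
  have hnorm2 : ∀ v ∈ K, ⟪v, θ₂⟫ ≠ 0 →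
      ∃ v', v' ∈ K ∧ v' ∈ pos ∧ 0 < ⟪v', θ₂⟫ ∧ ⟪v', θ₁⟫ = 0 ∧ (v' = v ∨ v' = -v) := by
    intro v hvK hv2
    rcases KC_sign hpos (hK.subset hvK) with h | h
    · exact ⟨v, hvK, h, lt_of_le_of_ne (KC_dom hRS hpos hK h2 hvK h) (Ne.symm hv2),
        hc2 v hvK hv2, Or.inl rfl⟩
    · have hnK := hK.neg v hvK
      have hn2 : ⟪-v, θ₂⟫ ≠ 0 := by rw [inner_neg_left]; exact neg_ne_zero.mpr hv2
      exact ⟨-v, hnK, h, lt_of_le_of_ne (KC_dom hRS hpos hK h2 hnK h) (Ne.symm hn2),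
        hc2 (-v) hnK hn2, Or.inr rfl⟩
  -- the two sides are mutually orthogonal
  have hd : ∀ x ∈ K, ∀ y ∈ K, ⟪x, θ₁⟫ ≠ 0 → ⟪y, θ₂⟫ ≠ 0 → ⟪x, y⟫ = 0 := by
    intro x hxK y hyK hx1 hy2
    obtain ⟨x', hx'K, hx'p, hx'1, hx'2, hx'eq⟩ := hnorm1 x hxK hx1
    obtain ⟨y', hy'K, hy'p, hy'2, hy'1, hy'eq⟩ := hnorm2 y hyK hy2
    have main : ⟪x', y'⟫ = 0 := by
      by_contra h0
      rcases lt_or_gt_of_ne h0 with hlt | hgt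
      · have hne' : x' ≠ -y' := by
          intro h
          exact (hpos.pos_iff y' (hK.subset hy'K)).mp hy'p (h ▸ hx'p)
        have hw : x' + y' ∈ Rs := kc_add_mem hRS (hK.subset hx'K) (hK.subset hy'K) hlt hne'
        have hwK : x' + y' ∈ K := hK.closed x' hx'K y' hy'K hw
        refine hL7 (x' + y') hwK ?_ ?_
        · rw [inner_add_left, hy'1, add_zero]; exact hx'1
        · rw [inner_add_left, hx'2, zero_add]; exact hy'2
      · have hne' : x' ≠ y' := by
          intro h
          rw [h] at hx'2
          exact ne_of_gt hy'2 hx'2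
        have hw : x' - y' ∈ Rs := kc_sub_mem hRS (hK.subset hx'K) (hK.subset hy'K) hgt hne'
        have hwK : x' - y' ∈ K := by
          have := hK.closed x' hx'K (-y') (hK.neg y' hy'K) (by rwa [← sub_eq_add_neg])
          rwa [← sub_eq_add_neg] at this
        have hw1 : 0 < ⟪x' - y', θ₁⟫ := by
          rw [inner_sub_left, hy'1, sub_zero]; exact hx'1
        have hw2 : ⟪x' - y', θ₂⟫ < 0 := by
          rw [inner_sub_left, hx'2, zero_sub]; linarith
        rcases KC_sign hpos hw with h | h
        · linarith [KC_dom hRS hpos hK h2 hwK h]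
        · have := KC_dom hRS hpos hK h1 (hK.neg _ hwK) h
          rw [inner_neg_left] at this
          linarith
    rcases hx'eq with h | h <;> rcases hy'eq with h2' | h2' <;> rw [h, h2'] at main <;>
      simpa using main
  -- propagate along connectivity
  have hstep : ∀ v w, Linked K v w →
      (⟪v, θ₁⟫ ≠ 0 ∨ (⟪v, θ₂⟫ = 0 ∧ ∃ x ∈ K, ⟪x, θ₁⟫ ≠ 0 ∧ ⟪x, v⟫ ≠ 0)) →
      (⟪w, θ₁⟫ ≠ 0 ∨ (⟪w, θ₂⟫ = 0 ∧ ∃ x ∈ K, ⟪x, θ₁⟫ ≠ 0 ∧ ⟪x, w⟫ ≠ 0)) := by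
    rintro v w ⟨hvK, hwK, hvw⟩ hJv
    by_cases hw1 : ⟪w, θ₁⟫ = 0
    · have key : ∃ x ∈ K, ⟪x, θ₁⟫ ≠ 0 ∧ ⟪x, w⟫ ≠ 0 := by
        by_cases hv1 : ⟪v, θ₁⟫ = 0
        · rcases hJv with h | ⟨hv2, x, hxK, hx1, hxv⟩
          · exact absurd hv1 h
          · by_cases hxw : ⟪x, w⟫ = 0
            · by_cases hsgn : 0 < ⟪x, v⟫
              · have huK : -v ∈ K := hK.neg v hvK
                have hun : ⟪x, -v⟫ < 0 := by rw [inner_neg_right]; linarith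
                have hune : x ≠ -(-v) := by
                  intro hh
                  rw [neg_neg] at hh
                  exact hx1 (by rw [hh]; exact hv1)
                have hxu : x + -v ∈ Rs :=
                  kc_add_mem hRS (hK.subset hxK) (hK.subset huK) hun hune
                refine ⟨x + -v, hK.closed x hxK (-v) huK hxu, ?_, ?_⟩
                · rw [inner_add_left, inner_neg_left, hv1, neg_zero, add_zero]; exact hx1
                · rw [inner_add_left, hxw, zero_add, inner_neg_left]
                  exact neg_ne_zero.mpr hvw
              · have hun : ⟪x, v⟫ < 0 := lt_of_le_of_ne (not_lt.mp hsgn) hxv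
                have hune : x ≠ -v := by
                  intro hh
                  apply hx1
                  rw [hh, inner_neg_left, hv1, neg_zero]
                have hxu : x + v ∈ Rs :=
                  kc_add_mem hRS (hK.subset hxK) (hK.subset hvK) hun hune
                refine ⟨x + v, hK.closed x hxK v hvK hxu, ?_, ?_⟩
                · rw [inner_add_left, hv1, add_zero]; exact hx1
                · rw [inner_add_left, hxw, zero_add]; exact hvw
            · exact ⟨x, hxK, hx1, hxw⟩
        · exact ⟨v, hvK, hv1, hvw⟩
      by_cases hw2 : ⟪w, θ₂⟫ = 0
      · exact Or.inr ⟨hw2, key⟩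
      · obtain ⟨x, hxK, hx1, hxw⟩ := key
        exact absurd (hd x hxK w hwK hx1 hw2) hxw
    · exact Or.inl hw1
  have haux : ∀ b, Relation.ReflTransGen (Linked K) θ₁ b →
      (⟪b, θ₁⟫ ≠ 0 ∨ (⟪b, θ₂⟫ = 0 ∧ ∃ x ∈ K, ⟪x, θ₁⟫ ≠ 0 ∧ ⟪x, b⟫ ≠ 0)) := by
    intro b hb
    induction hb with
    | refl => exact Or.inl (ne_of_gt (kc_inner_self_pos hRS hθ₁Rs))
    | tail h h' ih => exact hstep _ _ h' ih
  rcases haux θ₂ (hK.conn θ₁ h1.1 θ₂ h2.1) with h | ⟨h, _⟩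
  · exact h (by rw [real_inner_comm]; exact horth)
  · exact hRS.ne_zero (inner_self_eq_zero.mp h ▸ hθ₂Rs)

/-! ### The cascade tree -/

/-- `C` is a child of `K` in the cascade tree. -/
def KCChild (Rs pos : Set V) (K C : Set V) : Prop :=
  ∃ θ, IsHighestRoot Rs pos K θ ∧ IsComponent {α ∈ K | ⟪α, θ⟫ = 0} C

/-- Descendant relation in the cascade tree. -/
def KCDesc (Rs pos : Set V) : Set V → Set V → Prop :=
  Relation.ReflTransGen (KCChild Rs pos)

lemma KCChild_sub {K C : Set V} (h : KCChild Rs pos K C) : C ⊆ K := by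
  obtain ⟨θ, hθ, hC⟩ := h
  exact (KCcomp_subset hC).trans (fun x hx => hx.1)

lemma KCDesc_sub {K C : Set V} (h : KCDesc Rs pos K C) : C ⊆ K := by
  induction h with
  | refl => exact le_refl _
  | tail h h' ih => exact (KCChild_sub h').trans ih

lemma KCDesc_cascade {K C : Set V} (hK : CascadeSub Rs pos K) (h : KCDesc Rs pos K C) :
    CascadeSub Rs pos C := by
  induction h with
  | refl => exact hK
  | tail h h' ih =>
      obtain ⟨θ, hθ, hcomp⟩ := h'
      exact CascadeSub.step _ _ θ ih hθ hcomp

lemma KC_cascade_ancestor {K : Set V} (h : CascadeSub Rs pos K) :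
    ∃ C, IsComponent Rs C ∧ KCDesc Rs pos C K := by
  induction h with
  | base C hC => exact ⟨C, hC, Relation.ReflTransGen.refl⟩
  | step K C θ hK hθ hcomp ih =>
      obtain ⟨C₀, hc₀, hd⟩ := ih
      exact ⟨C₀, hc₀, hd.tail ⟨θ, hθ, hcomp⟩⟩

/-- Two cascade subsystems whose descendant chains start at the same cascade subsystem
and which intersect are comparable. -/
lemma KC_desc_comparable (hRS : IsRootSystem Rs) (hpos : IsPositiveSystem Rs pos) :
    ∀ {A K₁ : Set V}, KCDesc Rs pos A K₁ → CascadeSub Rs pos A →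
    ∀ {K₂ : Set V}, KCDesc Rs pos A K₂ → (K₁ ∩ K₂).Nonempty →
    KCDesc Rs pos K₁ K₂ ∨ KCDesc Rs pos K₂ K₁ := by
  intro A K₁ hd1
  induction hd1 using Relation.ReflTransGen.head_induction_on with
  | refl =>
      intro _ K₂ h2 _
      exact Or.inl h2
  | head hchild hrest ih =>
      intro hA K₂ h2 hmeet
      rcases Relation.ReflTransGen.cases_head h2 with rfl | ⟨C₂, hchild2, hrest2⟩
      · exact Or.inr (Relation.ReflTransGen.head hchild hrest)
      · obtain ⟨θ, hθ, hcomp⟩ := hchild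
        obtain ⟨θ', hθ', hcomp2⟩ := hchild2
        have hAsub := KCSub_cascade hRS hA
        have hθeq : θ = θ' := KC_max_unique hRS hpos hAsub hθ hθ'
        subst hθeq
        obtain ⟨x, hx1, hx2⟩ := hmeet
        have hCC := KCcomp_eq_of_mem₂ hcomp hcomp2
          (KCDesc_sub hrest hx1) (KCDesc_sub hrest2 hx2)
        refine ih (CascadeSub.step _ _ θ hA hθ hcomp) ?_ ⟨x, hx1, hx2⟩
        rw [hCC]
        exact hrest2

/-- Any two intersecting cascade subsystems are comparable in the descendant order. -/
lemma KC_comparable (hRS : IsRootSystem Rs) (hpos : IsPositiveSystem Rs pos)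
    {K₁ K₂ : Set V} (h1 : CascadeSub Rs pos K₁) (h2 : CascadeSub Rs pos K₂)
    (hmeet : (K₁ ∩ K₂).Nonempty) : KCDesc Rs pos K₁ K₂ ∨ KCDesc Rs pos K₂ K₁ := by
  obtain ⟨C₁, hc1, hd1⟩ := KC_cascade_ancestor h1
  obtain ⟨C₂, hc2, hd2⟩ := KC_cascade_ancestor h2
  obtain ⟨x, hx1, hx2⟩ := hmeet
  have hCC : C₁ = C₂ := KCcomp_eq_of_mem₂ hc1 hc2 (KCDesc_sub hd1 hx1) (KCDesc_sub hd2 hx2)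
  refine KC_desc_comparable hRS hpos hd1 (CascadeSub.base C₁ hc1) ?_ ⟨x, hx1, hx2⟩
  rw [hCC]
  exact hd2

/-- Covering: every positive root of a cascade subsystem lies in some `H_β`. -/
lemma KC_cover (hRS : IsRootSystem Rs) (hpos : IsPositiveSystem Rs pos) :
    ∀ (n : ℕ) (K : Set V), CascadeSub Rs pos K → K.ncard ≤ n → ∀ α ∈ K, α ∈ pos →
      α ∈ ⋃ β ∈ cascadeSet Rs pos, cascadeH Rs pos β := by
  intro n
  induction n with
  | zero =>
      intro K hK hc α hα _
      have hsub := KCSub_cascade hRS hK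
      have hfin : K.Finite := hRS.finite.subset hsub.subset
      have : K = ∅ := (Set.ncard_eq_zero hfin).mp (Nat.le_zero.mp hc)
      exact absurd (this ▸ hα) (Set.notMem_empty α)
  | succ n ih =>
      intro K hK hc α hαK hαp
      have hsub := KCSub_cascade hRS hK
      obtain ⟨θ, hθ⟩ := KC_max_exists hRS hpos hsub
      have hdom := KC_dom hRS hpos hsub hθ hαK hαp
      rcases eq_or_lt_of_le hdom with heq | hlt
      · set S := {γ ∈ K | ⟪γ, θ⟫ = 0} with hSdef
        have hαS : α ∈ S := ⟨hαK, heq.symm⟩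
        have hcomp : IsComponent S (KCcl S α) := ⟨α, hαS, rfl⟩
        have hCsub : CascadeSub Rs pos (KCcl S α) := CascadeSub.step K _ θ hK hθ hcomp
        have hfin : K.Finite := hRS.finite.subset hsub.subset
        have hCK : KCcl S α ⊂ K := by
          constructor
          · exact (KCcl_subset hαS).trans (fun x hx => hx.1)
          · intro hKC
            have hθC : θ ∈ S := KCcl_subset hαS (hKC hθ.1)
            have : θ ≠ 0 := fun h => hRS.ne_zero (h ▸ hsub.subset hθ.1)
            exact this (inner_self_eq_zero.mp hθC.2)
        have hlt' := Set.ncard_lt_ncard hCK hfin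
        exact ih (KCcl S α) hCsub (by omega) α KCcl_self hαp
      · exact Set.mem_biUnion ⟨K, hK, hθ⟩ ⟨K, hK, hθ, hαK, hlt⟩

/-- Disjointness auxiliary. -/
lemma KC_disj_aux (hRS : IsRootSystem Rs) (hpos : IsPositiveSystem Rs pos)
    {K₁ K₂ : Set V} {β₁ β₂ : V} (hK₁ : CascadeSub Rs pos K₁) (hK₂ : CascadeSub Rs pos K₂)
    (hθ₁ : IsHighestRoot Rs pos K₁ β₁) (hθ₂ : IsHighestRoot Rs pos K₂ β₂)
    (hdesc : KCDesc Rs pos K₂ K₁) (hne : β₁ ≠ β₂) {α : V} (hα₁ : α ∈ K₁)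
    (hp2 : 0 < ⟪α, β₂⟫) : False := by
  rcases Relation.ReflTransGen.cases_head hdesc with heq | ⟨C, hchild, hrest⟩
  · subst heq
    exact hne (KC_max_unique hRS hpos (KCSub_cascade hRS hK₂) hθ₁ hθ₂)
  · obtain ⟨θ, hθ, hcomp⟩ := hchild
    have hθβ : θ = β₂ := KC_max_unique hRS hpos (KCSub_cascade hRS hK₂) hθ hθ₂
    rw [← hθβ] at hp2
    have hαS : α ∈ {γ ∈ K₂ | ⟪γ, θ⟫ = 0} := KCcomp_subset hcomp (KCDesc_sub hrest hα₁)
    exact ne_of_gt hp2 hαS.2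

end Aux

/-- The set of positive roots is the disjoint union of the
Heisenberg sets `H_β` over the elements `β` of the Kostant cascade. -/
theorem statement_0 (Rs pos : Set V) (hRS : IsRootSystem Rs)
    (hpos : IsPositiveSystem Rs pos) :
    pos = ⋃ β ∈ cascadeSet Rs pos, cascadeH Rs pos β ∧
    (cascadeSet Rs pos).PairwiseDisjoint (cascadeH Rs pos) := by
  constructor
  · ext α
    constructor
    · intro hαp
      have hαRs : α ∈ Rs := hpos.subset hαp
      have hcomp : IsComponent Rs (KCcl Rs α) := ⟨α, hαRs, rfl⟩
      exact KC_cover hRS hpos ((KCcl Rs α).ncard) _ (CascadeSub.base _ hcomp) le_rfl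
        α KCcl_self hαp
    · intro hα
      obtain ⟨β, hβ, hαH⟩ := Set.mem_iUnion₂.mp hα
      obtain ⟨K, hK, hθ, hαK, hlt⟩ := hαH
      have hsub := KCSub_cascade hRS hK
      by_contra hnp
      have hneg : -α ∈ pos := by
        rcases KC_sign hpos (hsub.subset hαK) with h | h
        · exact absurd h hnp
        · exact h
      have := KC_dom hRS hpos hsub hθ (hsub.neg α hαK) hneg
      rw [inner_neg_left] at this
      linarith
  · intro β₁ hβ₁ β₂ hβ₂ hne
    rw [Function.onFun, Set.disjoint_left]
    intro α h1 h2
    obtain ⟨K₁, hK₁, hθ₁, hαK₁, hp1⟩ := h1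
    obtain ⟨K₂, hK₂, hθ₂, hαK₂, hp2⟩ := h2
    rcases KC_comparable hRS hpos hK₁ hK₂ ⟨α, hαK₁, hαK₂⟩ with hd | hd
    · exact KC_disj_aux hRS hpos hK₂ hK₁ hθ₂ hθ₁ hd hne.symm hαK₂ hp1
    · exact KC_disj_aux hRS hpos hK₁ hK₂ hθ₁ hθ₂ hd hne hαK₁ hp2
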